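/- Let d be a positive integer and p a prime with p ∤ d. Then for every integer m ≥ 0, p_△(m) ≥ (p−1)·∑_{a=0}^{m−1} a/d, i.e. the arithmetic polygon lies on or above (p−1) times the infinite Hodge polygon of △ = [0, d]. Moreover, equality holds at the point m = d: p_△(d) = (p−1)·∑_{a=0}^{d−1} a/d = (p−1)(d−1)/2. -/

import Mathlib

open scoped Classical
open Finset

/-- `{x}' := {x}` if the fractional part is nonzero, else `1`. -/
noncomputable def fract' (x : ℚ) : ℚ := if Int.fract x = 0 then 1 else Int.fract x

/-- `δ_∈(a) = 1` iff there is `i ≥ 1` with `p·i ≡ a (mod d)` and `i/d < {a/d}`. -/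
noncomputable def deltaIn (d p a : ℕ) : ℤ :=
  if ∃ i : ℕ, 1 ≤ i ∧ p * i ≡ a [MOD d] ∧ (i : ℚ) / d < Int.fract ((a : ℚ) / d) then 1 else 0

/-- `δ_<(a) = 1` iff `{a/d}' < {pa/d}'`. -/
noncomputable def deltaLt (d p a : ℕ) : ℤ :=
  if fract' ((a : ℚ) / d) < fract' (((p : ℚ) * a) / d) then 1 else 0

/-- `ϖ(a) = ⌈(p−1)a/d⌉ − δ_∈(a)`. -/
noncomputable def varpi (d p a : ℕ) : ℤ :=
  ⌈(((p : ℚ) - 1) * a) / d⌉ - deltaIn d p a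

/-- The arithmetic polygon of `△ = [0, d]`: `p_△(m) = ∑_{a=0}^{m−1} ϖ(a)`. -/
noncomputable def pTri (d p m : ℕ) : ℤ := ∑ a ∈ Finset.range m, varpi d p a

/- ### Auxiliary development -/

/-- multiplication by `p` mod `d`. -/
def sig (d p a : ℕ) : ℕ := p * a % d

lemma sig_lt (d p a : ℕ) (hd : 0 < d) : sig d p a < d := Nat.mod_lt _ hd

lemma sig_inj (d p : ℕ) (hco : Nat.gcd d p = 1) {a b : ℕ} (ha : a < d) (hb : b < d)
    (h : sig d p a = sig d p b) : a = b := by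
  have h1 : p * a ≡ p * b [MOD d] := by
    unfold Nat.ModEq; simpa [sig] using h
  have h2 : a ≡ b [MOD d] := Nat.ModEq.cancel_left_of_coprime hco h1
  unfold Nat.ModEq at h2
  rw [Nat.mod_eq_of_lt ha, Nat.mod_eq_of_lt hb] at h2
  exact h2

/-- key per-term formula for `a < d`. -/
lemma varpi_eq (d p : ℕ) (hd : 0 < d) {a : ℕ} (ha : a < d) :
    (varpi d p a : ℚ) = ((p : ℚ) - 1) * a / d + ((a : ℚ) - sig d p a) / d
      + (if a < sig d p a then 1 else 0)
      - (if ∃ i, i < a ∧ sig d p i = a then 1 else 0) := by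
  have hd0 : (d : ℚ) ≠ 0 := by positivity
  have hdm : p * a = d * (p * a / d) + sig d p a := (Nat.div_add_mod (p*a) d).symm
  set q : ℕ := p * a / d with hq
  set s : ℕ := sig d p a with hs
  have hslt : s < d := sig_lt d p a hd
  -- the ceiling part
  have hx : (((p : ℚ) - 1) * a) / d = ((s : ℚ) - a) / d + (q : ℕ) := by
    have : (p : ℚ) * a = d * q + s := by exact_mod_cast congrArg (Nat.cast : ℕ → ℚ) hdm
    field_simp
    ring_nf
    nlinarith [this]
  have hceil : ⌈(((p : ℚ) - 1) * a) / d⌉ = (if a < s then 1 else 0) + (q : ℤ) := by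
    rw [hx, Int.ceil_add_natCast]
    congr 1
    have had : (a : ℚ) < d := by exact_mod_cast ha
    have hsd : (s : ℚ) < d := by exact_mod_cast hslt
    have hdq : (0:ℚ) < d := by positivity
    by_cases hc : a < s
    · have hc' : (a:ℚ) < s := by exact_mod_cast hc
      rw [if_pos hc, Int.ceil_eq_iff]
      constructor
      · push_cast
        have : (0:ℚ) < ((s:ℚ) - a) / d := div_pos (by linarith) hdq
        linarith
      · push_cast
        rw [div_le_one hdq]
        linarith
    · have hc' : (s:ℚ) ≤ a := by exact_mod_cast not_lt.mp hc
      rw [if_neg hc, Int.ceil_eq_iff]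
      push_cast
      constructor
      · rw [lt_div_iff₀ hdq]
        have ha0 : (0:ℚ) ≤ a := by positivity
        have hs0 : (0:ℚ) ≤ s := by positivity
        nlinarith
      · apply div_nonpos_of_nonpos_of_nonneg <;> linarith
  -- the delta part
  have hfr : Int.fract ((a : ℚ) / d) = (a : ℚ) / d := by
    rw [Int.fract_eq_self]
    constructor
    · positivity
    · rw [div_lt_one (by positivity)]; exact_mod_cast ha
  have hdelta : deltaIn d p a = if ∃ i, i < a ∧ sig d p i = a then 1 else 0 := by
    unfold deltaIn
    rw [hfr]
    congr 1
    apply propext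
    constructor
    · rintro ⟨i, h1, h2, h3⟩
      have hia : i < a := by
        by_contra hcon
        push_neg at hcon
        have : (a : ℚ) / d ≤ (i : ℚ) / d := by
          gcongr
        linarith
      refine ⟨i, hia, ?_⟩
      have : (p * i) % d = a % d := h2
      rwa [Nat.mod_eq_of_lt ha] at this
    · rintro ⟨i, h1, h2⟩
      refine ⟨i, ?_, ?_, ?_⟩
      · rcases Nat.eq_zero_or_pos i with rfl | h
        · exfalso
          have : sig d p 0 = 0 := by simp [sig]
          omega
        · exact h
      · show (p * i) % d = a % d
        rw [Nat.mod_eq_of_lt ha]; exact h2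
      · gcongr
  rw [varpi]
  push_cast [hceil, hdelta]
  rw [hx]
  push_cast
  ring

/-- the main computation for `m ≤ d`. -/
lemma main_sum (d p : ℕ) (hd : 0 < d) (hco : Nat.gcd d p = 1) {m : ℕ} (hm : m ≤ d) :
    (pTri d p m : ℚ) - ((p : ℚ) - 1) * ∑ a ∈ range m, (a : ℚ) / d
      = ((∑ a ∈ range m \ (range m).image (sig d p), (a : ℚ))
          - ∑ a ∈ (range m).image (sig d p) \ range m, (a : ℚ)) / d
        + (((range m).filter fun a => m ≤ sig d p a).card : ℚ) := by
  classical
  set S := range m with hS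
  set σS := S.image (sig d p) with hσS
  have hinj : ∀ x ∈ S, ∀ y ∈ S, sig d p x = sig d p y → x = y := by
    intro x hx y hy h
    rw [hS, mem_range] at hx hy
    exact sig_inj d p hco (lt_of_lt_of_le hx hm) (lt_of_lt_of_le hy hm) h
  -- rewrite pTri via varpi_eq
  have h0 : (pTri d p m : ℚ) = ∑ a ∈ S, (varpi d p a : ℚ) := by
    rw [pTri]; push_cast; rfl
  have h1 : ∑ a ∈ S, (varpi d p a : ℚ)
      = ∑ a ∈ S, (((p : ℚ) - 1) * a / d) + ((∑ a ∈ S, (a : ℚ)) - ∑ a ∈ S, (sig d p a : ℚ)) / d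
        + ((S.filter fun a => a < sig d p a).card : ℚ)
        - ((S.filter fun a => ∃ i, i < a ∧ sig d p i = a).card : ℚ) := by
    have hmid : ∑ x ∈ S, ((x : ℚ) - sig d p x) / d
        = ((∑ a ∈ S, (a : ℚ)) - ∑ a ∈ S, (sig d p a : ℚ)) / d := by
      rw [← Finset.sum_div, Finset.sum_sub_distrib]
    rw [Finset.sum_congr rfl (fun a haS => varpi_eq d p hd (lt_of_lt_of_le (mem_range.mp haS) hm))]
    rw [Finset.sum_sub_distrib, Finset.sum_add_distrib, Finset.sum_add_distrib,
      Finset.sum_boole, Finset.sum_boole, hmid]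
  -- delta count
  have hB : (S.filter fun a => ∃ i, i < a ∧ sig d p i = a)
      = (S.filter fun a => a < sig d p a ∧ sig d p a < m).image (sig d p) := by
    ext b
    simp only [mem_filter, mem_image, hS, mem_range]
    constructor
    · rintro ⟨hb, i, hia, hib⟩
      exact ⟨i, ⟨by omega, by omega, by omega⟩, hib⟩
    · rintro ⟨a, ⟨ham, h1, h2⟩, rfl⟩
      exact ⟨h2, a, h1, rfl⟩
  have hBcard : ((S.filter fun a => ∃ i, i < a ∧ sig d p i = a)).card
      = ((S.filter fun a => a < sig d p a ∧ sig d p a < m)).card := by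
    rw [hB]
    apply Finset.card_image_of_injOn
    intro x hx y hy h
    exact hinj x (Finset.mem_of_mem_filter x hx) y (Finset.mem_of_mem_filter y hy) h
  -- #A = #B + #K
  have hABK : ((S.filter fun a => a < sig d p a).card : ℚ)
      = ((S.filter fun a => a < sig d p a ∧ sig d p a < m)).card
        + (((S.filter fun a => m ≤ sig d p a)).card : ℚ) := by
    have e1 : (S.filter fun a => a < sig d p a ∧ sig d p a < m)
        = (S.filter fun a => a < sig d p a).filter (fun a => sig d p a < m) := by
      rw [Finset.filter_filter]
    have e2 : (S.filter fun a => m ≤ sig d p a)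
        = (S.filter fun a => a < sig d p a).filter (fun a => ¬ sig d p a < m) := by
      rw [Finset.filter_filter]
      apply Finset.filter_congr
      intro x hx
      rw [hS, mem_range] at hx
      constructor
      · intro h; exact ⟨by omega, by omega⟩
      · intro h; omega
    have hsplit := Finset.card_filter_add_card_filter_not
      (s := S.filter fun a => a < sig d p a) (p := fun a => sig d p a < m)
    rw [e1, e2]
    push_cast [← hsplit]
    ring
  -- sum over image
  have hsig_sum : ∑ a ∈ S, (sig d p a : ℚ) = ∑ b ∈ σS, (b : ℚ) :=
    (Finset.sum_image hinj).symm
  have hdiff : (∑ a ∈ S, (a : ℚ)) - ∑ b ∈ σS, (b : ℚ)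
      = (∑ a ∈ S \ σS, (a : ℚ)) - ∑ a ∈ σS \ S, (a : ℚ) := by
    have e1 := Finset.sum_inter_add_sum_sdiff S σS (fun a => (a : ℚ))
    have e2 := Finset.sum_inter_add_sum_sdiff σS S (fun a => (a : ℚ))
    rw [Finset.inter_comm] at e2
    linarith
  rw [h0, h1, hsig_sum, hdiff, hBcard, hABK, Finset.mul_sum]
  have : ∑ a ∈ S, ((p:ℚ)-1) * ((a:ℚ)/d) = ∑ a ∈ S, ((p:ℚ)-1) * a / d := by
    apply Finset.sum_congr rfl; intro a _; ring
  rw [this]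
  ring

lemma ineq_le_d (d p : ℕ) (hd : 0 < d) (hco : Nat.gcd d p = 1) {m : ℕ} (hm : m ≤ d) :
    ((p : ℚ) - 1) * ∑ a ∈ range m, (a : ℚ) / d ≤ (pTri d p m : ℚ) := by
  classical
  have key := main_sum d p hd hco hm
  set S := range m with hS
  set σS := S.image (sig d p) with hσS
  set K := S.filter fun a => m ≤ sig d p a with hK
  have hσK : σS \ S = K.image (sig d p) := by
    rw [hσS, Finset.sdiff_eq_filter, Finset.filter_image]
    congr 1
    apply Finset.filter_congr
    intro x hx
    simp [hS, not_lt]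
  have hKcard : (σS \ S).card = K.card := by
    rw [hσK]
    apply Finset.card_image_of_injOn
    intro x hx y hy h
    have hx' : x ∈ S := Finset.mem_of_mem_filter x hx
    have hy' : y ∈ S := Finset.mem_of_mem_filter y hy
    rw [hS, mem_range] at hx' hy'
    exact sig_inj d p hco (by omega) (by omega) h
  have hub : ∑ a ∈ σS \ S, (a : ℚ) ≤ (K.card : ℚ) * ((d : ℚ) - 1) := by
    rw [← hKcard]
    have : ∀ b ∈ σS \ S, (b : ℚ) ≤ (d : ℚ) - 1 := by
      intro b hb
      have : b ∈ σS := Finset.mem_of_mem_filter b (by rwa [Finset.sdiff_eq_filter] at hb)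
      rw [hσS, Finset.mem_image] at this
      obtain ⟨a, _, rfl⟩ := this
      have h4 : (sig d p a : ℚ) + 1 ≤ d := by exact_mod_cast sig_lt d p a hd
      linarith
    calc ∑ a ∈ σS \ S, (a : ℚ) ≤ ((σS \ S).card : ℕ) • ((d : ℚ) - 1) :=
          Finset.sum_le_card_nsmul _ _ _ this
      _ = ((σS \ S).card : ℚ) * ((d : ℚ) - 1) := by rw [nsmul_eq_mul]
  have hlb : (0 : ℚ) ≤ ∑ a ∈ S \ σS, (a : ℚ) := by positivity
  have hdq : (0 : ℚ) < d := by positivity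
  have hk0 : (0 : ℚ) ≤ (K.card : ℚ) := by positivity
  have h2 : ((∑ a ∈ S \ σS, (a : ℚ)) - ∑ a ∈ σS \ S, (a : ℚ)) / d + (K.card : ℚ)
      ≥ (K.card : ℚ) / d := by
    rw [ge_iff_le, div_add' _ _ _ (ne_of_gt hdq), div_le_div_iff₀ hdq hdq]
    nlinarith
  have h3 : (0 : ℚ) ≤ (K.card : ℚ) / d := by positivity
  linarith [key]

lemma eq_at_d (d p : ℕ) (hd : 0 < d) (hco : Nat.gcd d p = 1) :
    (pTri d p d : ℚ) = ((p : ℚ) - 1) * ∑ a ∈ range d, (a : ℚ) / d := by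
  classical
  have key := main_sum d p hd hco (le_refl d)
  have hσ : (range d).image (sig d p) = range d := by
    apply Finset.eq_of_subset_of_card_le
    · intro b hb
      rw [Finset.mem_image] at hb
      obtain ⟨a, _, rfl⟩ := hb
      exact mem_range.mpr (sig_lt d p a hd)
    · rw [Finset.card_image_of_injOn, Finset.card_range]
      intro x hx y hy h
      rw [Finset.coe_range, Set.mem_Iio] at hx hy
      exact sig_inj d p hco hx hy h
  have hK : (range d).filter (fun a => d ≤ sig d p a) = ∅ := by
    apply Finset.filter_false_of_mem
    intro x _
    exact not_le.mpr (sig_lt d p x hd)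
  rw [hσ, hK, Finset.sdiff_self] at key
  simp at key
  linarith

lemma varpi_add_d (d p : ℕ) (hd : 0 < d) (a : ℕ) :
    varpi d p (a + d) = varpi d p a + ((p : ℤ) - 1) := by
  have hd0 : (d : ℚ) ≠ 0 := by positivity
  have hceil : ⌈(((p : ℚ) - 1) * (↑(a + d))) / d⌉ = ⌈(((p : ℚ) - 1) * a) / d⌉ + ((p : ℤ) - 1) := by
    have : (((p : ℚ) - 1) * (↑(a + d))) / d = (((p : ℚ) - 1) * a) / d + (((p : ℤ) - 1 : ℤ) : ℚ) := by
      push_cast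
      field_simp
    rw [this, Int.ceil_add_intCast]
  have hdelta : deltaIn d p (a + d) = deltaIn d p a := by
    unfold deltaIn
    have hfr : Int.fract ((↑(a + d) : ℚ) / d) = Int.fract ((a : ℚ) / d) := by
      have : (↑(a + d) : ℚ) / d = (a : ℚ) / d + 1 := by
        push_cast; field_simp
      rw [this, Int.fract_add_one]
    have hmod : ∀ i : ℕ, (p * i ≡ a + d [MOD d]) ↔ (p * i ≡ a [MOD d]) := by
      intro i
      unfold Nat.ModEq
      rw [Nat.add_mod_right]
    simp only [hfr, hmod]
  rw [varpi, varpi, hceil, hdelta]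
  ring

lemma F_add_d (d p : ℕ) (hd : 0 < d) (a : ℕ) :
    (varpi d p (a + d) : ℚ) - ((p : ℚ) - 1) * ((↑(a + d) : ℚ) / d)
      = (varpi d p a : ℚ) - ((p : ℚ) - 1) * ((a : ℚ) / d) := by
  have hd0 : (d : ℚ) ≠ 0 := by positivity
  rw [varpi_add_d d p hd a]
  have : (↑(a + d) : ℚ) / d = (a : ℚ) / d + 1 := by
    push_cast; field_simp
  rw [this]
  push_cast
  ring

lemma f_periodic (d p : ℕ) (hd : 0 < d) (hco : Nat.gcd d p = 1) (m : ℕ) :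
    (pTri d p (m + d) : ℚ) - ((p : ℚ) - 1) * ∑ a ∈ range (m + d), (a : ℚ) / d
      = (pTri d p m : ℚ) - ((p : ℚ) - 1) * ∑ a ∈ range m, (a : ℚ) / d := by
  classical
  set F : ℕ → ℚ := fun a => (varpi d p a : ℚ) - ((p : ℚ) - 1) * ((a : ℚ) / d) with hF
  have hf : ∀ n : ℕ, (pTri d p n : ℚ) - ((p : ℚ) - 1) * ∑ a ∈ range n, (a : ℚ) / d
      = ∑ a ∈ range n, F a := by
    intro n
    rw [pTri, Finset.mul_sum, hF]
    push_cast
    rw [Finset.sum_sub_distrib]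
  have hFd : ∀ a : ℕ, F (a + d) = F a := fun a => F_add_d d p hd a
  have hshift : ∀ k : ℕ, ∑ i ∈ range d, F (k + i) = ∑ i ∈ range d, F i := by
    intro k
    induction k with
    | zero => simp
    | succ n ih =>
      have e1 : ∑ i ∈ range d, F (n + 1 + i) = ∑ i ∈ range d, F (n + (i + 1)) := by
        apply Finset.sum_congr rfl
        intro i _
        congr 1
        omega
      have h1 := Finset.sum_range_succ' (fun i => F (n + i)) d
      have h2 := Finset.sum_range_succ (fun i => F (n + i)) d
      have h3 : F (n + d) = F (n + 0) := hFd n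
      rw [e1]
      have : ∑ i ∈ range d, F (n + (i + 1)) = ∑ i ∈ range d, F (n + i) := by
        simp only [h3] at h2
        linarith [h1, h2]
      rw [this, ih]
  rw [hf, hf, Finset.sum_range_add]
  have : ∑ i ∈ range d, F (m + i) = ∑ i ∈ range d, F i := hshift m
  rw [this]
  have hzero : ∑ i ∈ range d, F i = 0 := by
    have h := eq_at_d d p hd hco
    have h2 := hf d
    linarith
  rw [hzero]
  ring

theorem stmt5 (d p : ℕ) (hd : 0 < d) (hp : p.Prime) (hpd : ¬ p ∣ d) :
    (∀ m : ℕ, ((p : ℚ) - 1) * ∑ a ∈ Finset.range m, (a : ℚ) / d ≤ (pTri d p m : ℚ)) ∧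
    (pTri d p d : ℚ) = ((p : ℚ) - 1) * ∑ a ∈ Finset.range d, (a : ℚ) / d ∧
    (pTri d p d : ℚ) = ((p : ℚ) - 1) * ((d : ℚ) - 1) / 2 := by
  have hco : Nat.gcd d p = 1 := Nat.Coprime.symm ((Nat.Prime.coprime_iff_not_dvd hp).mpr hpd)
  refine ⟨?_, eq_at_d d p hd hco, ?_⟩
  · intro m
    induction m using Nat.strong_induction_on with
    | _ m ih =>
      by_cases hm : m ≤ d
      · exact ineq_le_d d p hd hco hm
      · push_neg at hm
        have hmd : m - d + d = m := by omega
        have := f_periodic d p hd hco (m - d)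
        rw [hmd] at this
        have hih := ih (m - d) (by omega)
        linarith
  · rw [eq_at_d d p hd hco]
    have hsum : ∑ a ∈ Finset.range d, (a : ℚ) / d = ((d : ℚ) - 1) / 2 := by
      rw [← Finset.sum_div]
      have h1 : ((∑ i ∈ range d, i : ℕ) : ℚ) * 2 = (d : ℚ) * ((d : ℚ) - 1) := by
        have := Finset.sum_range_id_mul_two d
        have h2 : (((∑ i ∈ range d, i) * 2 : ℕ) : ℚ) = ((d * (d - 1) : ℕ) : ℚ) := by
          exact_mod_cast congrArg (Nat.cast : ℕ → ℚ) this
        push_cast [Nat.cast_sub (by omega : 1 ≤ d)] at h2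
        push_cast
        linarith
      have hd0 : (d : ℚ) ≠ 0 := by positivity
      push_cast at h1 ⊢
      rw [div_eq_div_iff hd0 (by norm_num : (2:ℚ) ≠ 0)]
      linarith
    rw [hsum]
    ring
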